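/- Let f : Δ(Ω) × [0,1] → Ω be any function (with R uniform on [0,1]), and μ_1, …, μ_{k+1} distributions such that f(μ_i, R) ∈ S_i always, where S_i = {1,…,k+1}\{i}. Then Σ_{1≤i<j≤k+1} Pr[f(μ_i,R) ≠ f(μ_j,R)] ≥ k, and hence by averaging there exist indices i < j with Pr[f(μ_i,R) ≠ f(μ_j,R)] ≥ 2/(k+1). -/

import Mathlib

open Finset

/-- sort a pair -/
def sp {n : ℕ} (a b : Fin n) : Fin n × Fin n := if a < b then (a, b) else (b, a)

lemma sp_cases {n : ℕ} (a b : Fin n) : sp a b = (a, b) ∨ sp a b = (b, a) := by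
  unfold sp; split_ifs <;> simp

lemma sp_fst_lt {n : ℕ} {a b : Fin n} (h : a ≠ b) : (sp a b).1 < (sp a b).2 := by
  unfold sp
  rcases lt_or_gt_of_ne h with h' | h'
  · simp [h']
  · simp [h', not_lt_of_gt h']

lemma sp_eq {n : ℕ} {a b c d : Fin n} (hab : a ≠ b) (hcd : c ≠ d) (h : sp a b = sp c d) :
    (a = c ∧ b = d) ∨ (a = d ∧ b = c) := by
  unfold sp at h
  split_ifs at h <;> simp [Prod.ext_iff] at h <;> tauto

open scoped Classical in
lemma comb {n : ℕ} {Ω : Type*} (e : Fin (n+1) ↪ Ω) (x : Fin (n+1) → Ω)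
    (hx : ∀ i, ∃ j, j ≠ i ∧ x i = e j) :
    n ≤ (univ.filter (fun ij : Fin (n+1) × Fin (n+1) =>
        ij.1 < ij.2 ∧ x ij.1 ≠ x ij.2)).card := by
  obtain ⟨v, hv0, hxv⟩ := hx 0
  obtain ⟨w, hwv, hxw⟩ := hx v
  -- key facts
  have key : ∀ i, x i = x v → (w ≠ i ∧ x i ≠ x w) := by
    intro i hiv
    obtain ⟨j, hji, hxj⟩ := hx i
    have hjw : j = w := e.injective (by rw [← hxj, hiv, hxw])
    refine ⟨hjw ▸ hji, ?_⟩
    rw [hxj, hjw]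
    obtain ⟨j', hj'w, hxj'⟩ := hx w
    rw [hxj']
    intro hc
    exact hj'w (e.injective hc.symm)
  -- the injection
  set F : Fin (n+1) → Fin (n+1) × Fin (n+1) :=
    fun i => if x i ≠ x v then sp i v else sp i w with hF
  have hcard : (univ.erase v).card = n := by simp
  have hle := Finset.card_le_card_of_injOn (s := univ.erase v)
    (t := univ.filter (fun ij : Fin (n+1) × Fin (n+1) => ij.1 < ij.2 ∧ x ij.1 ≠ x ij.2)) F ?_ ?_
  · omega
  · intro i hi
    have hiv : i ≠ v := (Finset.mem_erase.mp hi).1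
    simp only [hF, Finset.mem_coe, Finset.mem_filter, Finset.mem_univ, true_and]
    by_cases hxiv : x i ≠ x v
    · rw [if_pos hxiv]
      refine ⟨sp_fst_lt hiv, ?_⟩
      rcases sp_cases i v with h | h <;> rw [h]
      · exact hxiv
      · exact fun hc => hxiv hc.symm
    · push_neg at hxiv
      obtain ⟨hwi, hxiw⟩ := key i hxiv
      rw [if_neg (not_not_intro hxiv)]
      have hiw : i ≠ w := fun h => hwi h.symm
      refine ⟨sp_fst_lt hiw, ?_⟩
      rcases sp_cases i w with h | h <;> rw [h]
      · exact hxiw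
      · exact fun hc => hxiw hc.symm
  · intro i hi i' hi' hFe
    have hiv : i ≠ v := (Finset.mem_erase.mp hi).1
    have hi'v : i' ≠ v := (Finset.mem_erase.mp hi').1
    simp only [hF] at hFe
    by_cases h1 : x i ≠ x v <;> by_cases h2 : x i' ≠ x v
    · rw [if_pos h1, if_pos h2] at hFe
      rcases sp_eq hiv hi'v hFe with ⟨h, _⟩ | ⟨_, h'⟩
      · exact h
      · exact absurd h'.symm hi'v
    · push_neg at h2
      have hi'w : i' ≠ w := fun h => (key i' h2).1 h.symm
      rw [if_pos h1, if_neg (not_not_intro h2)] at hFe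
      rcases sp_eq hiv hi'w hFe with ⟨_, h'⟩ | ⟨_, h'⟩
      · exact absurd h'.symm hwv
      · exact absurd h'.symm hi'v
    · push_neg at h1
      have hiw : i ≠ w := fun h => (key i h1).1 h.symm
      rw [if_neg (not_not_intro h1), if_pos h2] at hFe
      rcases sp_eq hiw hi'v hFe with ⟨_, h'⟩ | ⟨h, _⟩
      · exact absurd h' hwv
      · exact absurd h hiv
    · push_neg at h1 h2
      have hiw : i ≠ w := fun h => (key i h1).1 h.symm
      have hi'w : i' ≠ w := fun h => (key i' h2).1 h.symm
      rw [if_neg (not_not_intro h1), if_neg (not_not_intro h2)] at hFe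
      rcases sp_eq hiw hi'w hFe with ⟨h, _⟩ | ⟨h, h'⟩
      · exact h
      · rw [h, ← h']

open MeasureTheory

lemma measA {Ω : Type*} [MeasurableSpace Ω] [MeasurableSingletonClass Ω]
    {k : ℕ} (e : Fin (k+1) ↪ Ω) (g : Fin (k+1) → ℝ → Ω) (hg : ∀ i, Measurable (g i))
    (hrange : ∀ i r, ∃ j : Fin (k+1), j ≠ i ∧ g i r = e j) (i j : Fin (k+1)) :
    MeasurableSet {r : ℝ | g i r ≠ g j r} := by
  have : {r : ℝ | g i r ≠ g j r} =
      ⋃ (a : Fin (k+1)) (b : Fin (k+1)) (_ : a ≠ b),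
        (g i ⁻¹' {e a} ∩ g j ⁻¹' {e b}) := by
    ext r
    simp only [Set.mem_setOf_eq, Set.mem_iUnion, Set.mem_inter_iff, Set.mem_preimage,
      Set.mem_singleton_iff]
    constructor
    · intro hne
      obtain ⟨a, _, ha⟩ := hrange i r
      obtain ⟨b, _, hb⟩ := hrange j r
      exact ⟨a, b, fun hab => hne (by rw [ha, hb, hab]), ha, hb⟩
    · rintro ⟨a, b, hab, ha, hb⟩
      rw [ha, hb]
      exact fun h => hab (e.injective h)
  rw [this]
  exact MeasurableSet.iUnion fun a => MeasurableSet.iUnion fun b => MeasurableSet.iUnion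
    fun _ => ((hg i (measurableSet_singleton _)).inter (hg j (measurableSet_singleton _)))

theorem stmt_12 {Ω : Type*} [MeasurableSpace Ω] [MeasurableSingletonClass Ω]
    (k : ℕ) (hk : 1 ≤ k) (e : Fin (k+1) ↪ Ω)
    (g : Fin (k+1) → ℝ → Ω) (hg : ∀ i, Measurable (g i))
    (hrange : ∀ i r, ∃ j : Fin (k+1), j ≠ i ∧ g i r = e j) :
    (k : ENNReal) ≤
      ∑ ij ∈ Finset.univ.filter
          (fun ij : Fin (k+1) × Fin (k+1) => ij.1 < ij.2),
        (volume.restrict (Set.Icc (0:ℝ) 1)) {r | g ij.1 r ≠ g ij.2 r} ∧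
    ∃ i j : Fin (k+1), i < j ∧
      ENNReal.ofReal (2/((k:ℝ) + 1)) ≤
        (volume.restrict (Set.Icc (0:ℝ) 1)) {r | g i r ≠ g j r} := by
  classical
  set μ := volume.restrict (Set.Icc (0:ℝ) 1) with hμ
  have hμuniv : μ Set.univ = 1 := by
    rw [hμ, Measure.restrict_apply_univ, Real.volume_Icc]
    norm_num
  set P := Finset.univ.filter (fun ij : Fin (k+1) × Fin (k+1) => ij.1 < ij.2) with hP
  have hmeas : ∀ ij : Fin (k+1) × Fin (k+1), MeasurableSet {r : ℝ | g ij.1 r ≠ g ij.2 r} :=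
    fun ij => measA e g hg hrange ij.1 ij.2
  -- pointwise bound
  have hpt : ∀ r : ℝ, (k : ENNReal) ≤
      ∑ ij ∈ P, Set.indicator {r' : ℝ | g ij.1 r' ≠ g ij.2 r'} (1 : ℝ → ENNReal) r := by
    intro r
    have hcomb := comb e (fun i => g i r) (fun i => hrange i r)
    have heq : ∑ ij ∈ P, Set.indicator {r' : ℝ | g ij.1 r' ≠ g ij.2 r'} (1 : ℝ → ENNReal) r
        = ∑ ij ∈ P, (if g ij.1 r ≠ g ij.2 r then (1:ENNReal) else 0) := by
      refine Finset.sum_congr rfl fun ij _ => ?_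
      by_cases h : g ij.1 r ≠ g ij.2 r <;> simp [Set.indicator, h]
    rw [heq, ← Finset.sum_filter, Finset.sum_const, nsmul_eq_mul, mul_one]
    have hsub : (Finset.univ.filter (fun ij : Fin (k+1) × Fin (k+1) =>
        ij.1 < ij.2 ∧ g ij.1 r ≠ g ij.2 r)) = P.filter (fun ij => g ij.1 r ≠ g ij.2 r) := by
      rw [hP, Finset.filter_filter]
    have hcomb' : k ≤ (P.filter (fun ij => g ij.1 r ≠ g ij.2 r)).card := by
      rw [← hsub]; exact hcomb
    exact_mod_cast hcomb'
  -- first claim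
  have h1 : (k : ENNReal) ≤ ∑ ij ∈ P, μ {r | g ij.1 r ≠ g ij.2 r} := by
    have : ∑ ij ∈ P, μ {r | g ij.1 r ≠ g ij.2 r}
        = ∫⁻ r, (∑ ij ∈ P, Set.indicator {r' : ℝ | g ij.1 r' ≠ g ij.2 r'}
            (fun _ => (1:ENNReal)) r) ∂μ := by
      rw [lintegral_finset_sum]
      · exact Finset.sum_congr rfl fun ij _ => (lintegral_indicator_one (hmeas ij)).symm
      · exact fun ij _ => (measurable_const.indicator (hmeas ij))
    rw [this]
    calc (k : ENNReal) = ∫⁻ _, (k : ENNReal) ∂μ := by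
          rw [lintegral_const, hμuniv, mul_one]
      _ ≤ _ := lintegral_mono fun r => hpt r
  refine ⟨h1, ?_⟩
  -- averaging
  have hPne : P.Nonempty := by
    refine ⟨(⟨0, by omega⟩, ⟨1, by omega⟩), Finset.mem_filter.mpr ⟨Finset.mem_univ _, ?_⟩⟩
    exact Fin.mk_lt_mk.mpr (by omega)
  have hPcard : P.card ≤ k * (k+1) / 2 := by
    have : P.card = ∑ ij ∈ (Finset.univ ×ˢ Finset.univ : Finset (Fin (k+1) × Fin (k+1))),
        if ij.1 < ij.2 then 1 else 0 := by
      rw [hP, Finset.card_filter, Finset.univ_product_univ]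
    rw [this, Finset.sum_product_right]
    have h3 : ∀ j : Fin (k+1), (∑ i : Fin (k+1), if i < j then 1 else 0) = (j : ℕ) := by
      intro j
      rw [← Finset.sum_filter]
      simp only [Finset.sum_const, smul_eq_mul, mul_one]
      have : Finset.univ.filter (fun i : Fin (k+1) => i < j) = Finset.Iio j := by
        ext; simp
      rw [this, Fin.card_Iio]
    simp only [h3]
    rw [Fin.sum_univ_eq_sum_range (fun i => i) (k+1), Finset.sum_range_id]
    have : (k+1) * (k+1-1) = k * (k+1) := by simp [Nat.mul_comm]
    rw [this]
  have havg : ∃ ij ∈ P, ENNReal.ofReal (2/((k:ℝ) + 1)) ≤ μ {r | g ij.1 r ≠ g ij.2 r} := by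
    apply ENNReal.exists_le_of_sum_le hPne
    calc ∑ _ij ∈ P, ENNReal.ofReal (2/((k:ℝ) + 1))
        = P.card * ENNReal.ofReal (2/((k:ℝ) + 1)) := by
          rw [Finset.sum_const, nsmul_eq_mul]
      _ ≤ (k * (k+1) / 2 : ℕ) * ENNReal.ofReal (2/((k:ℝ) + 1)) := by
          refine mul_le_mul_left ?_ _
          exact_mod_cast hPcard
      _ ≤ (k : ENNReal) := by
          rw [← ENNReal.ofReal_natCast (k * (k+1) / 2), ← ENNReal.ofReal_natCast k,
            ← ENNReal.ofReal_mul (by positivity)]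
          apply ENNReal.ofReal_le_ofReal
          have h2 : ((k * (k+1) / 2 : ℕ) : ℝ) = (k : ℝ) * ((k : ℝ) + 1) / 2 := by
            rw [Nat.cast_div (Nat.even_mul_succ_self k).two_dvd (by norm_num)]
            push_cast; ring
          have h4 : (k:ℝ) * ((k:ℝ)+1) / 2 * (2 / ((k:ℝ)+1)) = k := by
            have : (k:ℝ) + 1 ≠ 0 := by positivity
            field_simp
          rw [h2, h4]
      _ ≤ _ := h1
  obtain ⟨ij, hijP, hij⟩ := havg
  exact ⟨ij.1, ij.2, (Finset.mem_filter.mp hijP).2, hij⟩
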